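/- Let α > 0. If S = D_α((A_η)_{η<α}) where each A_η ⊆ ℕ^ℕ is open and the A_η are increasing, then S is guessable with fewer than α+1 mind changes. -/

import Mathlib

open Filter Topology Classical

/-- The initial segment `f↾n` of an infinite sequence. -/
def res (f : ℕ → ℕ) (n : ℕ) : List ℕ := List.ofFn (fun i : Fin n => f i)

/-- `[X]`: the set of infinite sequences all of whose finite initial segments lie in `X`. -/
def seqsIn (X : Set (List ℕ)) : Set (ℕ → ℕ) := {f | ∀ n, res f n ∈ X}

/-- The simplified remainder `S_α`. -/
noncomputable def SRem (S : Set (ℕ → ℕ)) (α : Ordinal.{0}) : Set (List ℕ) :=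
  Ordinal.limitRecOn α Set.univ
    (fun _ prev => {x | x ∈ prev ∧ ∃ f g : ℕ → ℕ,
      f ∈ seqsIn prev ∧ g ∈ seqsIn prev ∧ res f x.length = x ∧ res g x.length = x ∧
      f ∈ S ∧ g ∉ S})
    (fun _ _ ih => ⋂ (β : Ordinal.{0}) (h : β < _), ih β h)

/-- Wadge's remainder `Rm_μ(A,B)`. -/
noncomputable def Rm (A B : Set (ℕ → ℕ)) (μ : Ordinal.{0}) : Set (ℕ → ℕ) :=
  if μ = 0 then Set.univ
  else ⋂ (ν : {ν : Ordinal.{0} // ν < μ}),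
    closure (Rm A B ν.1 ∩ A) ∩ closure (Rm A B ν.1 ∩ B)
termination_by μ
decreasing_by exact ν.2

/-- The least ordinal at which the simplified remainders stabilize. -/
noncomputable def alphaS (S : Set (ℕ → ℕ)) : Ordinal.{0} :=
  sInf {α | SRem S α = SRem S (α + 1)}

/-- `S_∞`, the stable value of the simplified remainders. -/
noncomputable def Sinf (S : Set (ℕ → ℕ)) : Set (List ℕ) := SRem S (alphaS S)

/-- `β(σ)`: the least ordinal `γ` with `σ ∉ S_γ`. -/
noncomputable def betaOf (S : Set (ℕ → ℕ)) (σ : List ℕ) : Ordinal.{0} :=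
  sInf {γ | σ ∉ SRem S γ}

/-- `G` guesses `S`. -/
def Guesses (G : List ℕ → Bool) (S : Set (ℕ → ℕ)) : Prop :=
  ∀ f : ℕ → ℕ, ∀ᶠ n in atTop, (G (res f n) = true ↔ f ∈ S)

def Guessable (S : Set (ℕ → ℕ)) : Prop := ∃ G, Guesses G S

/-- `G, H` witness that `S` is guessable with `< α` mind changes. -/
def WitnessMC (S : Set (ℕ → ℕ)) (α : Ordinal.{0}) (G : List ℕ → Bool)
    (H : List ℕ → Ordinal.{0}) : Prop :=
  Guesses G S ∧ (∀ σ, H σ < α) ∧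
  (∀ (f : ℕ → ℕ) (n : ℕ), H (res f (n + 1)) ≤ H (res f n)) ∧
  (∀ (f : ℕ → ℕ) (n : ℕ), G (res f (n + 1)) ≠ G (res f n) →
    H (res f (n + 1)) < H (res f n))

def GuessableMC (S : Set (ℕ → ℕ)) (α : Ordinal.{0}) : Prop := ∃ G H, WitnessMC S α G H

/-- An ordinal is even if it is of the form `λ + n` with `λ` limit or zero and `n` even. -/
def OrdEven (o : Ordinal.{0}) : Prop :=
  ∃ (l : Ordinal.{0}) (n : ℕ), (l = 0 ∨ Order.IsSuccLimit l) ∧ o = l + n ∧ Even n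

/-- The Hausdorff difference set `D_α((A_η)_{η<α})`. -/
def DSet (α : Ordinal.{0}) (A : Ordinal.{0} → Set (ℕ → ℕ)) : Set (ℕ → ℕ) :=
  {x | ∃ η, η < α ∧ x ∈ A η ∧ (∀ η', η' < η → x ∉ A η') ∧ (OrdEven η ↔ ¬ OrdEven α)}

/-- Membership in the class `D_α(Σ⁰₁)`. -/
def InDiff (α : Ordinal.{0}) (S : Set (ℕ → ℕ)) : Prop :=
  ∃ A : Ordinal.{0} → Set (ℕ → ℕ), (∀ η, η < α → IsOpen (A η)) ∧
    (∀ η η', η ≤ η' → η' < α → A η ⊆ A η') ∧ S = DSet α A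
/-- Wadge's `Rm_Ω(S)`: the stable value of `Rm_μ(S, Sᶜ)`. -/
noncomputable def RmInf (S : Set (ℕ → ℕ)) : Set (ℕ → ℕ) :=
  Rm S Sᶜ (sInf {μ : Ordinal.{0} | Rm S Sᶜ μ = Rm S Sᶜ (μ + 1)})

/-- The canonical guesser `G_S`. -/
noncomputable def GS (S : Set (ℕ → ℕ)) (σ : List ℕ) : Bool :=
  if (∃ f : ℕ → ℕ, res f σ.length = σ ∧ f ∈ seqsIn (SRem S (betaOf S σ - 1))) then
    decide (∃ f : ℕ → ℕ, res f σ.length = σ ∧ f ∈ seqsIn (SRem S (betaOf S σ - 1)) ∧ f ∈ S)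
  else if h : σ = [] then false
  else GS S σ.dropLast
termination_by σ.length
decreasing_by
  simp only [List.length_dropLast]
  exact Nat.sub_lt (List.length_pos_iff.mpr h) one_pos

/-- `S` is `F_σ`: a countable union of closed sets. -/
def IsFsigma (S : Set (ℕ → ℕ)) : Prop :=
  ∃ C : ℕ → Set (ℕ → ℕ), (∀ n, IsClosed (C n)) ∧ S = ⋃ n, C n

/-- Boolean combinations of open sets. -/
inductive BoolComb : Set (ℕ → ℕ) → Prop
  | isOpen {s : Set (ℕ → ℕ)} : IsOpen s → BoolComb s
  | compl {s : Set (ℕ → ℕ)} : BoolComb s → BoolComb sᶜ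
  | union {s t : Set (ℕ → ℕ)} : BoolComb s → BoolComb t → BoolComb (s ∪ t)

/-- The Borel class `Σ⁰_α` on Baire space (for `α ≥ 1`). -/
noncomputable def Sigma0 (α : Ordinal.{0}) : Set (Set (ℕ → ℕ)) :=
  if α = 1 then {s | IsOpen s}
  else {s | ∃ g : ℕ → Set (ℕ → ℕ), s = ⋃ n, g n ∧
    ∀ n, ∃ β : {β : Ordinal.{0} // β < α}, 1 ≤ β.1 ∧ (g n)ᶜ ∈ Sigma0 β.1}
termination_by α
decreasing_by exact β.2

/-- The ambiguous Borel class `Δ⁰_α`. -/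
noncomputable def Delta0 (α : Ordinal.{0}) : Set (Set (ℕ → ℕ)) :=
  {s | s ∈ Sigma0 α ∧ sᶜ ∈ Sigma0 α}

/-- The Boolean characteristic function. -/
noncomputable def chi (X : Set (ℕ → ℕ)) (f : ℕ → ℕ) : Bool := decide (f ∈ X)

/-- `G` guesses `S` based on the sequence of sets `Ss`. -/
def GuessesBased (G : List Bool → Bool) (Ss : ℕ → Set (ℕ → ℕ)) (S : Set (ℕ → ℕ)) : Prop :=
  ∀ f : ℕ → ℕ, ∀ᶠ n in atTop,
    (G (List.ofFn (fun i : Fin n => chi (Ss i) f)) = true ↔ f ∈ S)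

/-- `S` is `μ`th-order guessable. -/
def HigherGuessable (μ : Ordinal.{0}) (S : Set (ℕ → ℕ)) : Prop :=
  ∃ Ss : ℕ → Set (ℕ → ℕ), (∀ i, ∃ μi, μi < μ ∧ Ss i ∈ Delta0 (μi + 1)) ∧
    ∃ G : List Bool → Bool, GuessesBased G Ss S



lemma res_eq_iff {f g : ℕ → ℕ} {n : ℕ} : res g n = res f n ↔ ∀ i < n, g i = f i := by
  rw [res, res, List.ofFn_inj, funext_iff]
  exact ⟨fun h i hi => h ⟨i, hi⟩, fun h i => h i i.2⟩

lemma res_len (f : ℕ → ℕ) (n : ℕ) : (res f n).length = n := by simp [res]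

/-- If `f` is in an open set `U`, some cylinder around `f` is contained in `U`. -/
lemma open_cyl {U : Set (ℕ → ℕ)} (hU : IsOpen U) {f : ℕ → ℕ} (hf : f ∈ U) :
    ∃ n, ∀ g : ℕ → ℕ, (∀ i < n, g i = f i) → g ∈ U := by
  obtain ⟨I, u, h1, h2⟩ := isOpen_pi_iff.mp hU f hf
  classical
  refine ⟨(I.sup id) + 1, fun g hg => h2 ?_⟩
  intro i hi
  have : g i = f i := hg i (Nat.lt_succ_of_le (Finset.le_sup (f := id) hi))
  rw [this]
  exact (h1 i hi).2

theorem stmt10 (α : Ordinal.{0}) (hα : 0 < α) (A : Ordinal.{0} → Set (ℕ → ℕ))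
    (hopen : ∀ η, η < α → IsOpen (A η))
    (hmono : ∀ η η', η ≤ η' → η' < α → A η ⊆ A η')
    (S : Set (ℕ → ℕ)) (hS : S = DSet α A) :
    GuessableMC S (α + 1) := by
  classical
  set P : List ℕ → Ordinal.{0} → Prop :=
    fun σ η => η < α ∧ ∀ g : ℕ → ℕ, res g σ.length = σ → g ∈ A η with hP
  set r : List ℕ → Ordinal.{0} := fun σ => sInf (insert α {η | P σ η}) with hr
  have hrle : ∀ σ, r σ ≤ α := fun σ => csInf_le' (Set.mem_insert _ _)
  have hrmem : ∀ σ, r σ ∈ insert α {η | P σ η} :=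
    fun σ => csInf_mem ⟨α, Set.mem_insert _ _⟩
  have hrlt : ∀ σ, r σ < α → P σ (r σ) := by
    intro σ hlt
    rcases hrmem σ with h | h
    · exact absurd h (ne_of_lt hlt)
    · exact h
  -- along a sequence, r at res f n < α implies f ∈ A (r (res f n))
  have hself : ∀ (f : ℕ → ℕ) (n : ℕ), r (res f n) < α → f ∈ A (r (res f n)) := by
    intro f n hlt
    exact (hrlt _ hlt).2 f (by rw [res_len])
  -- monotonicity
  have hmonoR : ∀ (f : ℕ → ℕ) (n : ℕ), r (res f (n + 1)) ≤ r (res f n) := by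
    intro f n
    apply csInf_le'
    rcases hrmem (res f n) with h | h
    · rw [h]; exact Set.mem_insert _ _
    · right
      refine ⟨h.1, fun g hg => h.2 g ?_⟩
      rw [res_len] at hg ⊢
      rw [res_eq_iff] at hg ⊢
      exact fun i hi => hg i (Nat.lt_succ_of_lt hi)
  refine ⟨fun σ => decide (r σ < α ∧ (OrdEven (r σ) ↔ ¬ OrdEven α)), r, ?_, ?_, hmonoR, ?_⟩
  · -- Guesses
    intro f
    by_cases h : ∃ η, η < α ∧ f ∈ A η
    · set T : Set Ordinal.{0} := {η | η < α ∧ f ∈ A η} with hT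
      have hTne : T.Nonempty := h
      have hmemT : sInf T ∈ T := csInf_mem hTne
      obtain ⟨h1, h2⟩ := hmemT
      have hleast : ∀ η', η' < sInf T → f ∉ A η' := by
        intro η' hη' hmem
        exact absurd (csInf_le' (show η' ∈ T from ⟨hη'.trans h1, hmem⟩)) (not_le.mpr hη')
      obtain ⟨n0, hn0⟩ := open_cyl (hopen _ h1) h2
      rw [eventually_atTop]
      refine ⟨n0, fun n hn => ?_⟩
      have hreq : r (res f n) = sInf T := by
        have hle1 : r (res f n) ≤ sInf T := by
          apply csInf_le'
          right
          refine ⟨h1, fun g hg => ?_⟩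
          rw [res_len, res_eq_iff] at hg
          exact hn0 g (fun i hi => hg i (lt_of_lt_of_le hi hn))
        have hlt' : r (res f n) < α := lt_of_le_of_lt hle1 h1
        have : f ∈ A (r (res f n)) := hself f n hlt'
        exact le_antisymm hle1 (csInf_le' ⟨hlt', this⟩)
      show decide (r (res f n) < α ∧ (OrdEven (r (res f n)) ↔ ¬ OrdEven α)) = true ↔ f ∈ S
      rw [hreq, decide_eq_true_iff]
      constructor
      · rintro ⟨-, hpar⟩
        rw [hS]
        exact ⟨sInf T, h1, h2, hleast, hpar⟩
      · intro hfS
        rw [hS] at hfS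
        obtain ⟨η, hη1, hη2, hη3, hη4⟩ := hfS
        have : η = sInf T := by
          refine le_antisymm ?_ (csInf_le' ⟨hη1, hη2⟩)
          by_contra hc
          exact hη3 _ (not_le.mp hc) h2
        rw [← this]
        exact ⟨hη1, hη4⟩
    · have hra : ∀ n, r (res f n) = α := by
        intro n
        refine le_antisymm (hrle _) (not_lt.mp fun hc => ?_)
        exact h ⟨r (res f n), hc, hself f n hc⟩
      refine Eventually.of_forall fun n => ?_
      show decide (r (res f n) < α ∧ (OrdEven (r (res f n)) ↔ ¬ OrdEven α)) = true ↔ f ∈ S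
      rw [decide_eq_true_iff]
      constructor
      · rintro ⟨hlt, -⟩
        exact absurd (hra n ▸ hlt) (lt_irrefl α)
      · intro hfS
        rw [hS] at hfS
        obtain ⟨η, hη1, hη2, -⟩ := hfS
        exact absurd ⟨η, hη1, hη2⟩ h
  · -- bound
    intro σ
    exact lt_of_le_of_lt (hrle σ) (by rw [Ordinal.add_one_eq_succ]; exact Order.lt_succ α)
  · -- strict decrease on mind change
    intro f n hne
    rcases lt_or_eq_of_le (hmonoR f n) with hlt | heq
    · exact hlt
    · exact absurd (show _ = _ by simp only [heq]) hne
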